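/- Let I = [a,b] be a compact interval, z ∈ ℝ, w : I → ℝ continuous, and J = {t ∈ I : w(t) > z}. Assume w is locally absolutely continuous on J with w′(t) ≤ 0 for almost every t ∈ J, and that either w(a) ≤ z or w(a) ≤ w(b). Then either w(t) ≤ z for all t ∈ I, or there exists k > z such that w(t) = k for all t ∈ I. -/
import Mathlib


open MeasureTheory Set

/-- barrier lemma: Let `w` be continuous on `[a,b]`,
`J = {t ∈ [a,b] : w t > z}`, `w` locally absolutely continuous on `J`
(expressed by the fundamental theorem of calculus on compact subintervals of `J`
with a.e. derivative `w'`), `w' ≤ 0` a.e. on `J`, and `w a ≤ z` or `w a ≤ w b`.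
Then `w ≤ z` on `[a,b]`, or `w` is constantly equal to some `k > z`. -/
theorem barrier_lemma
    (a b z : ℝ) (hab : a < b) (w w' : ℝ → ℝ)
    (hw : ContinuousOn w (Icc a b))
    (J : Set ℝ) (hJ : J = {t ∈ Icc a b | z < w t})
    (hFTC : ∀ c d : ℝ, c ≤ d → Icc c d ⊆ J → w d - w c = ∫ t in c..d, w' t)
    (hder : ∀ᵐ t ∂(volume : Measure ℝ), t ∈ J → w' t ≤ 0)
    (hbc : w a ≤ z ∨ w a ≤ w b) :
    (∀ t ∈ Icc a b, w t ≤ z) ∨ ∃ k > z, ∀ t ∈ Icc a b, w t = k := by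
  -- Monotonicity on intervals contained in J
  have mono : ∀ c d : ℝ, c ≤ d → Icc c d ⊆ J → w d ≤ w c := by
    intro c d hcd hsub
    have hftc := hFTC c d hcd hsub
    have hint : ∫ t in c..d, w' t ≤ 0 := by
      have h0 : 0 ≤ ∫ t in c..d, (fun t => -w' t) t := by
        apply intervalIntegral.integral_nonneg_of_ae_restrict hcd
        have h1 : ∀ᵐ t ∂(volume.restrict (Icc c d)), t ∈ J → w' t ≤ 0 :=
          ae_restrict_of_ae hder
        have h2 : ∀ᵐ t ∂(volume.restrict (Icc c d)), t ∈ Icc c d :=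
          ae_restrict_mem measurableSet_Icc
        filter_upwards [h1, h2] with t h1 h2
        simp only [Pi.zero_apply, neg_nonneg]
        exact h1 (hsub h2)
      rw [intervalIntegral.integral_neg] at h0
      linarith
    linarith
  -- Barrier: if w goes (weakly) below z somewhere in [a,s], then w s ≤ z
  have barrier : ∀ s ∈ Icc a b, (∃ t ∈ Icc a s, w t ≤ z) → w s ≤ z := by
    intro s hs ⟨t0, ht0, ht0z⟩
    by_contra hws
    push_neg at hws
    set S : Set ℝ := {t ∈ Icc a s | w t ≤ z} with hS
    have hSne : S.Nonempty := ⟨t0, ht0, ht0z⟩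
    have hIccs : Icc a s ⊆ Icc a b := Icc_subset_Icc le_rfl hs.2
    have hSclosed : IsClosed S := by
      have : S = Icc a s ∩ w ⁻¹' (Iic z) := by
        ext t; simp [hS, and_comm]
      rw [this]
      exact (hw.mono hIccs).preimage_isClosed_of_isClosed isClosed_Icc isClosed_Iic
    have hScomp : IsCompact S :=
      isCompact_Icc.of_isClosed_subset hSclosed (fun t ht => ht.1)
    set c := sSup S with hc
    have hcS : c ∈ S := hScomp.sSup_mem hSne
    have hcs : c < s := lt_of_le_of_ne hcS.1.2 (by
      intro h; rw [h] at hcS; exact absurd hcS.2 (not_le.2 hws))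
    have hgt : ∀ u ∈ Ioc c s, z < w u := by
      intro u hu
      by_contra h
      push_neg at h
      have : u ∈ S := ⟨⟨hcS.1.1.trans hu.1.le, hu.2⟩, h⟩
      exact absurd (le_csSup hScomp.bddAbove this) (not_le.2 hu.1)
    have hle : ∀ u ∈ Ioc c s, w s ≤ w u := by
      intro u hu
      refine mono u s hu.2 ?_
      intro t ht
      have htIoc : t ∈ Ioc c s := ⟨lt_of_lt_of_le hu.1 ht.1, ht.2⟩
      rw [hJ]
      exact ⟨⟨hcS.1.1.trans htIoc.1.le, htIoc.2.trans hs.2⟩, hgt t htIoc⟩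
    -- take limit u → c⁺
    have hcab : c ∈ Icc a b := hIccs hcS.1
    have htend : Filter.Tendsto w (nhdsWithin c (Ioc c s)) (nhds (w c)) := by
      have := (hw c hcab).mono (show Ioc c s ⊆ Icc a b from fun t ht =>
        ⟨hcS.1.1.trans ht.1.le, ht.2.trans hs.2⟩)
      exact this
    have : w s ≤ w c := by
      have hne : (nhdsWithin c (Ioc c s)).NeBot := left_nhdsWithin_Ioc_neBot hcs
      exact ge_of_tendsto htend (eventually_mem_nhdsWithin.mono hle)
    linarith [hcS.2, hws]
  -- Main case split
  rcases hbc with h | h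
  · left
    intro t ht
    exact barrier t ht ⟨a, ⟨le_rfl, ht.1⟩, h⟩
  · by_cases ha : w a ≤ z
    · left
      intro t ht
      exact barrier t ht ⟨a, ⟨le_rfl, ht.1⟩, ha⟩
    · push_neg at ha
      -- w > z everywhere on [a,b]
      have hall : ∀ t ∈ Icc a b, z < w t := by
        intro t ht
        by_contra hcon
        push_neg at hcon
        have hb : w b ≤ z := barrier b ⟨hab.le, le_rfl⟩ ⟨t, ⟨ht.1, ht.2⟩, hcon⟩
        linarith
      have hsubJ : Icc a b ⊆ J := by
        intro t ht; rw [hJ]; exact ⟨ht, hall t ht⟩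
      right
      refine ⟨w a, ha, fun t ht => ?_⟩
      have h1 : w t ≤ w a := mono a t ht.1 fun u hu => hsubJ ⟨hu.1, hu.2.trans ht.2⟩
      have h2 : w b ≤ w t := mono t b ht.2 fun u hu => hsubJ ⟨ht.1.trans hu.1, hu.2⟩
      linarith
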